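/- The subspace 𝔗 := Σ_{1≤i<j≤n} [X_{ij}(R), X_{ji}(R)] of st_n(R) is a Lie subalgebra, it contains the center of st_n(R), and [𝔗, X_{ij}(R)] ⊆ X_{ij}(R) for all i ≠ j. -/

import Mathlib

/-- The defining relations of the Steinberg Lie algebra `st_n(R)`, for a family of
`K`-linear maps `X i j : R → L` (playing the role of `a ↦ X_{ij}(a)`). -/
structure SteinbergRel (K R : Type) [CommRing K] [Ring R] [Algebra K R]
    (n : ℕ) (L : Type) [LieRing L] [LieAlgebra K L]
    (X : Fin n → Fin n → R →ₗ[K] L) : Prop where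
  bracket_mul : ∀ ⦃i j k : Fin n⦄, i ≠ j → j ≠ k → i ≠ k → ∀ a b : R,
    ⁅X i j a, X j k b⁆ = X i k (a * b)
  bracket_zero : ∀ ⦃i j k l : Fin n⦄, i ≠ j → k ≠ l → j ≠ k → i ≠ l → ∀ a b : R,
    ⁅X i j a, X k l b⁆ = 0

/-- `L` together with the family `X` *is* the Steinberg Lie algebra `st_n(R)`:
the relations hold, `L` is generated by the `X_{ij}(a)`, and `(L, X)` is initial among
Lie algebras equipped with such a family. -/
structure IsSteinberg (K R : Type) [CommRing K] [Ring R] [Algebra K R]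
    (n : ℕ) (L : Type) [LieRing L] [LieAlgebra K L]
    (X : Fin n → Fin n → R →ₗ[K] L) extends SteinbergRel K R n L X : Prop where
  span_top : LieSubalgebra.lieSpan K L
    (⋃ (i : Fin n) (j : Fin n) (_ : i ≠ j), Set.range (X i j)) = ⊤
  initial : ∀ (L' : Type) [LieRing L'] [LieAlgebra K L']
    (X' : Fin n → Fin n → R →ₗ[K] L'), SteinbergRel K R n L' X' →
    ∃ f : L →ₗ⁅K⁆ L', ∀ i j a, f (X i j a) = X' i j a

/-- The subspace `𝔗 = Σ_{i<j} ⁅X_{ij}(R), X_{ji}(R)⁆` of the Steinberg Lie algebra `st_n(R)`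
is closed under the bracket (a Lie subalgebra), contains the center of `st_n(R)`, and
satisfies `⁅𝔗, X_{ij}(R)⁆ ⊆ X_{ij}(R)` for all `i ≠ j`. -/
theorem steinberg_T_subalgebra (K R L : Type) [CommRing K] [Ring R] [Algebra K R]
    [LieRing L] [LieAlgebra K L] (n : ℕ) (hn : 3 ≤ n)
    (X : Fin n → Fin n → R →ₗ[K] L) (h : IsSteinberg K R n L X)
    (T : Submodule K L)
    (hT : T = ⨆ (i : Fin n) (j : Fin n) (_ : i < j),
      Submodule.span K {x : L | ∃ a b : R, x = ⁅X i j a, X j i b⁆}) :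
    (∀ x ∈ T, ∀ y ∈ T, ⁅x, y⁆ ∈ T) ∧
    (∀ z ∈ LieAlgebra.center K L, z ∈ T) ∧
    (∀ i j : Fin n, i ≠ j → ∀ x ∈ T, ∀ a : R, ⁅x, X i j a⁆ ∈ LinearMap.range (X i j)) := by
  classical
  obtain ⟨hrel, hspan, hinit⟩ := h
  -- T ≤ N criterion
  have T_le : ∀ N : Submodule K L,
      (∀ i j : Fin n, i < j → ∀ a b : R, ⁅X i j a, X j i b⁆ ∈ N) → T ≤ N := by
    intro N hN
    rw [hT]
    refine iSup_le fun i => iSup_le fun j => iSup_le fun hij => Submodule.span_le.2 ?_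
    rintro x ⟨a, b, rfl⟩
    exact hN i j hij a b
  have genT : ∀ i j : Fin n, i < j → ∀ a b : R, ⁅X i j a, X j i b⁆ ∈ T := by
    intro i j hij a b
    rw [hT]
    exact Submodule.mem_iSup_of_mem i (Submodule.mem_iSup_of_mem j
      (Submodule.mem_iSup_of_mem hij (Submodule.subset_span ⟨a, b, rfl⟩)))
  have genT' : ∀ i j : Fin n, i ≠ j → ∀ a b : R, ⁅X i j a, X j i b⁆ ∈ T := by
    intro i j hij a b
    rcases hij.lt_or_gt with hlt | hlt
    · exact genT i j hlt a b
    · rw [← lie_skew]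
      exact neg_mem (genT j i hlt b a)
  -- the generic cases of the key bracket computation
  have gen0 : ∀ i j k l : Fin n, i ≠ j → k ≠ l → ¬(k = i ∧ l = j) → ¬(k = j ∧ l = i) →
      ∀ a b c : R, ⁅⁅X i j a, X j i b⁆, X k l c⁆ ∈ LinearMap.range (X k l) := by
    intro i j k l hij hkl h1 h2 a b c
    rw [lie_lie]
    by_cases hki : k = i
    · subst hki
      have hlj : l ≠ j := fun e => h1 ⟨rfl, e⟩
      rw [hrel.bracket_mul hij.symm hkl (Ne.symm hlj),
        hrel.bracket_mul hij (Ne.symm hlj) hkl,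
        hrel.bracket_zero hij hkl hij.symm hkl, lie_zero, sub_zero]
      exact ⟨a * (b * c), rfl⟩
    · by_cases hlj : l = j
      · subst hlj
        have A : ⁅X l i b, X k l c⁆ = -(X k i (c * b)) := by
          rw [← lie_skew, hrel.bracket_mul hkl hij.symm hki]
        have B : ⁅X i l a, X k l c⁆ = 0 := hrel.bracket_zero hij hkl (Ne.symm hkl) hij a c
        rw [A, B, lie_zero, sub_zero, lie_neg, ← lie_skew,
          hrel.bracket_mul hki hij hkl, neg_neg]
        exact ⟨c * b * a, rfl⟩
      · by_cases hkj : k = j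
        · subst hkj
          have hli : l ≠ i := fun e => h2 ⟨rfl, e⟩
          have A : ⁅X k i b, X k l c⁆ = 0 := hrel.bracket_zero hij.symm hkl hij hkl b c
          have B : ⁅X i k a, X k l c⁆ = X i l (a * c) :=
            hrel.bracket_mul hij hkl (Ne.symm hli) a c
          rw [A, B, lie_zero, zero_sub, hrel.bracket_mul hij.symm (Ne.symm hli) hkl]
          exact neg_mem ⟨b * (a * c), rfl⟩
        · by_cases hli : l = i
          · subst hli
            have A : ⁅X j l b, X k l c⁆ = 0 :=
              hrel.bracket_zero hij.symm hkl (Ne.symm hkl) hij.symm b c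
            have B : ⁅X l j a, X k l c⁆ = -(X k j (c * a)) := by
              rw [← lie_skew, hrel.bracket_mul hkl hij (fun e => hkj e)]
            rw [A, B, lie_zero, lie_neg, ← lie_skew,
              hrel.bracket_mul hkj hij.symm hkl, neg_neg, zero_sub]
            exact neg_mem ⟨c * a * b, rfl⟩
          · have A : ⁅X j i b, X k l c⁆ = 0 :=
              hrel.bracket_zero hij.symm hkl (fun e => hki e.symm) (fun e => hlj e.symm) b c
            have B : ⁅X i j a, X k l c⁆ = 0 :=
              hrel.bracket_zero hij hkl (fun e => hkj e.symm) (fun e => hli e.symm) a c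
            rw [A, B, lie_zero, lie_zero, sub_zero]
            exact zero_mem _
  -- the special case ⁅⁅X i j a, X j i b⁆, X i j c⁆
  have special : ∀ i j : Fin n, i ≠ j → ∀ a b c : R,
      ⁅⁅X i j a, X j i b⁆, X i j c⁆ ∈ LinearMap.range (X i j) := by
    intro i j hij a b c
    obtain ⟨m, hmi, hmj⟩ : ∃ m : Fin n, m ≠ i ∧ m ≠ j := by
      have hcard : ({i, j} : Finset (Fin n)).card ≤ 2 := by
        refine le_trans (Finset.card_insert_le i {j}) ?_
        simp
      have hne : (({i, j} : Finset (Fin n))ᶜ).Nonempty := by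
        rw [← Finset.card_pos, Finset.card_compl, Fintype.card_fin]
        omega
      obtain ⟨m, hm⟩ := hne
      simp only [Finset.mem_compl, Finset.mem_insert, Finset.mem_singleton, not_or] at hm
      exact ⟨m, hm.1, hm.2⟩
    have hdecomp : X i j c = ⁅X i m c, X m j 1⁆ := by
      rw [hrel.bracket_mul (Ne.symm hmi) hmj hij, mul_one]
    obtain ⟨u, hu⟩ := gen0 i j i m hij (Ne.symm hmi) (fun e => hmj e.2) (fun e => hij e.1) a b c
    obtain ⟨v, hv⟩ := gen0 i j m j hij hmj (fun e => hmi e.1) (fun e => hmj e.1) a b 1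
    rw [hdecomp, leibniz_lie, ← hu, ← hv,
      hrel.bracket_mul (Ne.symm hmi) hmj hij u 1,
      hrel.bracket_mul (Ne.symm hmi) hmj hij c v]
    exact add_mem ⟨u * 1, rfl⟩ ⟨c * v, rfl⟩
  -- the key bracket computation, all cases
  have gen : ∀ i j k l : Fin n, i ≠ j → k ≠ l → ∀ a b c : R,
      ⁅⁅X i j a, X j i b⁆, X k l c⁆ ∈ LinearMap.range (X k l) := by
    intro i j k l hij hkl a b c
    by_cases h1 : k = i ∧ l = j
    · obtain ⟨rfl, rfl⟩ := h1
      exact special _ _ hij a b c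
    · by_cases h2 : k = j ∧ l = i
      · obtain ⟨rfl, rfl⟩ := h2
        have e : ⁅X l k a, X k l b⁆ = -⁅X k l b, X l k a⁆ := by rw [lie_skew]
        rw [e, neg_lie]
        exact neg_mem (special k l hij.symm b a c)
      · exact gen0 i j k l hij hkl h1 h2 a b c
  -- part 3
  have part3 : ∀ i j : Fin n, i ≠ j → ∀ x ∈ T, ∀ a : R,
      ⁅x, X i j a⁆ ∈ LinearMap.range (X i j) := by
    intro k l hkl x hx c
    have hle : T ≤ Submodule.comap (-(LieAlgebra.ad K L (X k l c)))
        (LinearMap.range (X k l)) := by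
      apply T_le
      intro i j hij a b
      simp only [Submodule.mem_comap, LinearMap.neg_apply, LieAlgebra.ad_apply]
      rw [lie_skew]
      exact gen i j k l (ne_of_lt hij) hkl a b c
    have hmem := hle hx
    simp only [Submodule.mem_comap, LinearMap.neg_apply, LieAlgebra.ad_apply] at hmem
    rwa [lie_skew] at hmem
  -- part 1
  have TT : ∀ x ∈ T, ∀ i j : Fin n, i < j → ∀ a b : R, ⁅x, ⁅X i j a, X j i b⁆⁆ ∈ T := by
    intro x hx i j hij a b
    obtain ⟨u, hu⟩ := part3 i j (ne_of_lt hij) x hx a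
    obtain ⟨v, hv⟩ := part3 j i (ne_of_lt hij).symm x hx b
    rw [leibniz_lie, ← hu, ← hv]
    exact add_mem (genT i j hij u b) (genT i j hij a v)
  have part1 : ∀ x ∈ T, ∀ y ∈ T, ⁅x, y⁆ ∈ T := by
    intro x hx y hy
    have hle : T ≤ Submodule.comap (LieAlgebra.ad K L x) T := by
      apply T_le
      intro i j hij a b
      simp only [Submodule.mem_comap, LieAlgebra.ad_apply]
      exact TT x hx i j hij a b
    simpa only [Submodule.mem_comap, LieAlgebra.ad_apply] using hle hy
  refine ⟨part1, ?_, part3⟩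
  -- Part 2: the center is contained in T.
  -- First, map to the matrix Lie algebra.
  let X' : Fin n → Fin n → R →ₗ[K] Matrix (Fin n) (Fin n) R := fun i j =>
    { toFun := fun a => Matrix.single i j a
      map_add' := fun a b => Matrix.single_add i j a b
      map_smul' := fun r a => by simp }
  have hX' : ∀ (i j : Fin n) (a : R), X' i j a = Matrix.single i j a := fun _ _ _ => rfl
  letI : LieRing (Matrix (Fin n) (Fin n) R) := LieRing.ofAssociativeRing
  have rel' : SteinbergRel K R n (Matrix (Fin n) (Fin n) R) X' := by
    constructor
    · intro i j k hij hjk hik a b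
      rw [Ring.lie_def, hX', hX', hX', Matrix.single_mul_single_same,
        Matrix.single_mul_single_of_ne b j k i (Ne.symm hik) a, sub_zero]
    · intro i j k l hij hkl hjk hil a b
      rw [Ring.lie_def, hX', hX', Matrix.single_mul_single_of_ne a i j k hjk b,
        Matrix.single_mul_single_of_ne b k l i (Ne.symm hil) a, sub_zero]
  obtain ⟨f, hf⟩ := hinit (Matrix (Fin n) (Fin n) R) X' rel'
  -- the image of a central element has vanishing off-diagonal entries
  have offdiag : ∀ z ∈ LieAlgebra.center K L, ∀ p q : Fin n, p ≠ q → f z p q = 0 := by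
    intro z hz p q hpq
    have hzc : ⁅X q p 1, z⁆ = 0 := ((LieModule.mem_maxTrivSubmodule K L L z).mp hz) (X q p 1)
    have h0 : ⁅f (X q p 1), f z⁆ = (0 : Matrix (Fin n) (Fin n) R) := by
      rw [← LieHom.map_lie, hzc, map_zero]
    rw [hf, hX'] at h0
    rw [Ring.lie_def] at h0
    have e := congrFun (congrFun h0 q) q
    have e2 : (f z * Matrix.single q p (1 : R)) q q = 0 :=
      Matrix.mul_single_apply_of_ne 1 q p q q (Ne.symm hpq) (f z)
    simp only [Matrix.sub_apply, Matrix.single_mul_apply_same, one_mul, e2,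
      sub_zero, Matrix.zero_apply] at e
    exact e
  -- the submodule generated by T and all the X i j (i ≠ j) is everything
  set MM : Submodule K L :=
    T ⊔ ⨆ (i : Fin n) (j : Fin n) (_ : i ≠ j), LinearMap.range (X i j) with hMM
  have memM_T : T ≤ MM := le_sup_left
  have memM_X : ∀ i j : Fin n, i ≠ j → ∀ a : R, X i j a ∈ MM := by
    intro i j hij a
    apply Submodule.mem_sup_right
    exact Submodule.mem_iSup_of_mem i (Submodule.mem_iSup_of_mem j
      (Submodule.mem_iSup_of_mem hij ⟨a, rfl⟩))
  have M_le : ∀ N : Submodule K L,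
      (∀ i j : Fin n, i < j → ∀ a b : R, ⁅X i j a, X j i b⁆ ∈ N) →
      (∀ i j : Fin n, i ≠ j → ∀ a : R, X i j a ∈ N) → MM ≤ N := by
    intro N h1 h2
    refine sup_le (T_le N h1) (iSup_le fun i => iSup_le fun j => iSup_le fun hij => ?_)
    rintro x ⟨a, rfl⟩
    exact h2 i j hij a
  have XXM : ∀ i j k l : Fin n, i ≠ j → k ≠ l → ∀ a c : R, ⁅X i j a, X k l c⁆ ∈ MM := by
    intro i j k l hij hkl a c
    by_cases hjk : j = k
    · subst hjk
      by_cases hil : i = l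
      · subst hil
        exact memM_T (genT' i j hij a c)
      · rw [hrel.bracket_mul hij hkl hil]
        exact memM_X i l hil (a * c)
    · by_cases hil : i = l
      · subst hil
        have e : ⁅X i j a, X k i c⁆ = -(X k j (c * a)) := by
          rw [← lie_skew, hrel.bracket_mul hkl hij (fun e => hjk e.symm)]
        rw [e]
        exact neg_mem (memM_X k j (fun e => hjk e.symm) (c * a))
      · rw [hrel.bracket_zero hij hkl hjk hil]
        exact zero_mem _
  have brkM : ∀ k l : Fin n, k ≠ l → ∀ c : R, ∀ x ∈ MM, ⁅x, X k l c⁆ ∈ MM := by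
    intro k l hkl c x hx
    have hle : MM ≤ Submodule.comap (-(LieAlgebra.ad K L (X k l c))) MM := by
      apply M_le
      · intro i j hij a b
        simp only [Submodule.mem_comap, LinearMap.neg_apply, LieAlgebra.ad_apply]
        rw [lie_skew]
        obtain ⟨u, hu⟩ := gen i j k l (ne_of_lt hij) hkl a b c
        rw [← hu]
        exact memM_X k l hkl u
      · intro i j hij a
        simp only [Submodule.mem_comap, LinearMap.neg_apply, LieAlgebra.ad_apply]
        rw [lie_skew]
        exact XXM i j k l hij hkl a c
    have hmem := hle hx
    simp only [Submodule.mem_comap, LinearMap.neg_apply, LieAlgebra.ad_apply] at hmem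
    rwa [lie_skew] at hmem
  have brkTgenM : ∀ i j : Fin n, i < j → ∀ a b : R, ∀ x ∈ MM,
      ⁅x, ⁅X i j a, X j i b⁆⁆ ∈ MM := by
    intro i j hij a b x hx
    rw [leibniz_lie]
    refine add_mem ?_ ?_
    · exact brkM j i (ne_of_lt hij).symm b _ (brkM i j (ne_of_lt hij) a x hx)
    · have hy := brkM j i (ne_of_lt hij).symm b x hx
      have e : ⁅X i j a, ⁅x, X j i b⁆⁆ = -⁅⁅x, X j i b⁆, X i j a⁆ := by rw [lie_skew]
      rw [e]
      exact neg_mem (brkM i j (ne_of_lt hij) a _ hy)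
  have MMlie : ∀ x ∈ MM, ∀ y ∈ MM, ⁅x, y⁆ ∈ MM := by
    intro x hx y hy
    have hle : MM ≤ Submodule.comap (LieAlgebra.ad K L x) MM := by
      apply M_le
      · intro i j hij a b
        simpa only [Submodule.mem_comap, LieAlgebra.ad_apply] using brkTgenM i j hij a b x hx
      · intro i j hij a
        simpa only [Submodule.mem_comap, LieAlgebra.ad_apply] using brkM i j hij a x hx
    simpa only [Submodule.mem_comap, LieAlgebra.ad_apply] using hle hy
  have hMtop : ∀ w : L, w ∈ MM := by
    intro w
    let S : LieSubalgebra K L := { toSubmodule := MM, lie_mem' := fun {x y} hx hy => MMlie x hx y hy }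
    have hle : LieSubalgebra.lieSpan K L (⋃ (i : Fin n) (j : Fin n) (_ : i ≠ j),
        Set.range (X i j)) ≤ S := by
      apply LieSubalgebra.lieSpan_le.2
      rintro x hx
      simp only [Set.mem_iUnion, Set.mem_range] at hx
      obtain ⟨i, j, hij, a, rfl⟩ := hx
      exact memM_X i j hij a
    rw [hspan] at hle
    exact hle (LieSubalgebra.mem_top w)
  -- the projection-correction linear map D
  let entry : Fin n → Fin n → (Matrix (Fin n) (Fin n) R →ₗ[K] R) := fun p q =>
    { toFun := fun M => M p q
      map_add' := fun _ _ => rfl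
      map_smul' := fun _ _ => rfl }
  let D : L →ₗ[K] L := ∑ p : Fin n, ∑ q : Fin n,
    if p = q then 0 else (X p q).comp ((entry p q).comp f.toLinearMap)
  have hD : ∀ w : L, D w = ∑ p : Fin n, ∑ q : Fin n,
      if p = q then 0 else X p q (f w p q) := by
    intro w
    show (∑ p : Fin n, ∑ q : Fin n,
      if p = q then 0 else (X p q).comp ((entry p q).comp f.toLinearMap)) w = _
    rw [LinearMap.sum_apply]
    refine Finset.sum_congr rfl fun p _ => ?_
    rw [LinearMap.sum_apply]
    refine Finset.sum_congr rfl fun q _ => ?_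
    by_cases hpq : p = q
    · simp [hpq]
    · rw [if_neg hpq, if_neg hpq]
      rfl
  have hD_X : ∀ i j : Fin n, i ≠ j → ∀ a : R, D (X i j a) = X i j a := by
    intro i j hij a
    rw [hD]
    have h1 : ∀ p ∈ Finset.univ, p ≠ i →
        (∑ q : Fin n, if p = q then 0 else X p q (f (X i j a) p q)) = 0 := by
      intro p _ hp
      refine Finset.sum_eq_zero fun q _ => ?_
      by_cases hpq : p = q
      · simp [hpq]
      · rw [if_neg hpq, hf, hX']
        have : Matrix.single i j a p q = 0 := by
          simp only [Matrix.single, Matrix.of_apply, ite_eq_right_iff]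
          rintro ⟨rfl, rfl⟩
          exact absurd rfl hp
        rw [this, map_zero]
    rw [Finset.sum_eq_single_of_mem i (Finset.mem_univ i) h1]
    have h2 : ∀ q ∈ Finset.univ, q ≠ j →
        (if i = q then 0 else X i q (f (X i j a) i q)) = 0 := by
      intro q _ hq
      by_cases hiq : i = q
      · simp [hiq]
      · rw [if_neg hiq, hf, hX']
        have : Matrix.single i j a i q = 0 := by
          simp only [Matrix.single, Matrix.of_apply, ite_eq_right_iff]
          rintro ⟨-, rfl⟩
          exact absurd rfl hq
        rw [this, map_zero]
    rw [Finset.sum_eq_single_of_mem j (Finset.mem_univ j) h2, if_neg hij, hf, hX']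
    congr 1
    simp [Matrix.single]
  have hD_T : ∀ i j : Fin n, i < j → ∀ a b : R, D ⁅X i j a, X j i b⁆ = 0 := by
    intro i j hij a b
    have hfT : f ⁅X i j a, X j i b⁆ =
        Matrix.single i i (a * b) - Matrix.single j j (b * a) := by
      rw [LieHom.map_lie, hf, hf, hX', hX', Ring.lie_def, Matrix.single_mul_single_same,
        Matrix.single_mul_single_same]
    rw [hD]
    refine Finset.sum_eq_zero fun p _ => Finset.sum_eq_zero fun q _ => ?_
    by_cases hpq : p = q
    · simp [hpq]
    · rw [if_neg hpq, hfT]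
      have e1 : Matrix.single i i (a * b) p q = 0 := by
        simp only [Matrix.single, Matrix.of_apply, ite_eq_right_iff]
        rintro ⟨rfl, rfl⟩
        exact absurd rfl hpq
      have e2 : Matrix.single j j (b * a) p q = 0 := by
        simp only [Matrix.single, Matrix.of_apply, ite_eq_right_iff]
        rintro ⟨rfl, rfl⟩
        exact absurd rfl hpq
      rw [Matrix.sub_apply, e1, e2, sub_zero, map_zero]
  intro z hz
  have hsub : MM ≤ Submodule.comap (LinearMap.id - D) T := by
    apply M_le
    · intro i j hij a b
      simp only [Submodule.mem_comap, LinearMap.sub_apply, LinearMap.id_apply]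
      rw [hD_T i j hij a b, sub_zero]
      exact genT i j hij a b
    · intro i j hij a
      simp only [Submodule.mem_comap, LinearMap.sub_apply, LinearMap.id_apply]
      rw [hD_X i j hij a, sub_self]
      exact zero_mem T
  have h1 : z - D z ∈ T := by
    have hmem := hsub (hMtop z)
    simpa only [Submodule.mem_comap, LinearMap.sub_apply, LinearMap.id_apply] using hmem
  have h2 : D z = 0 := by
    rw [hD]
    refine Finset.sum_eq_zero fun p _ => Finset.sum_eq_zero fun q _ => ?_
    by_cases hpq : p = q
    · simp [hpq]
    · rw [if_neg hpq, offdiag z hz p q hpq, map_zero]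
  rwa [h2, sub_zero] at h1
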